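/- For θ, ζ > 0 and n ≥ 2, let V_n(θ,ζ) be the variance of the number of proper lower records of a permutation distributed according to P_n^{(θ,ζ)}, i.e. V_n(θ,ζ) = Σ_{π ∈ S_n} ℓ(π)² P_n^{(θ,ζ)}(π) − (Σ_{π ∈ S_n} ℓ(π) P_n^{(θ,ζ)}(π))². Then V_n(θ,ζ)/log n → θ as n → ∞. -/

import Mathlib

open Finset

/-- `π j` is a lower record: it is the minimum among the first `j+1` entries. -/
def isLowerRecord {n : ℕ} (π : Equiv.Perm (Fin n)) (j : Fin n) : Prop :=
  ∀ k, k ≤ j → π j ≤ π k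

/-- `π j` is an upper record: it is the maximum among the first `j+1` entries. -/
def isUpperRecord {n : ℕ} (π : Equiv.Perm (Fin n)) (j : Fin n) : Prop :=
  ∀ k, k ≤ j → π k ≤ π j

instance {n : ℕ} (π : Equiv.Perm (Fin n)) (j : Fin n) : Decidable (isLowerRecord π j) :=
  inferInstanceAs (Decidable (∀ k, k ≤ j → π j ≤ π k))

instance {n : ℕ} (π : Equiv.Perm (Fin n)) (j : Fin n) : Decidable (isUpperRecord π j) :=
  inferInstanceAs (Decidable (∀ k, k ≤ j → π k ≤ π j))

/-- number of proper (position ≥ 2, i.e. index ≥ 1) lower records -/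
def properLowerCount {n : ℕ} (π : Equiv.Perm (Fin n)) : ℕ :=
  (univ.filter fun j : Fin n => 0 < j.val ∧ isLowerRecord π j).card

/-- number of proper (position ≥ 2, i.e. index ≥ 1) upper records -/
def properUpperCount {n : ℕ} (π : Equiv.Perm (Fin n)) : ℕ :=
  (univ.filter fun j : Fin n => 0 < j.val ∧ isUpperRecord π j).card

/-- `A n ℓ u` = number of permutations of `{1,…,n}` with exactly `ℓ` proper lower
records and exactly `u` proper upper records. -/
def A (n ℓ u : ℕ) : ℕ :=
  (univ.filter fun π : Equiv.Perm (Fin n) =>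
    properLowerCount π = ℓ ∧ properUpperCount π = u).card

/-- `P_n^{(θ,ζ)}(π) = θ^{ℓ(π)} ζ^{u(π)} / ∏_{j=0}^{n−2}(θ+ζ+j)`. -/
noncomputable def Ptz (θ ζ : ℝ) {n : ℕ} (π : Equiv.Perm (Fin n)) : ℝ :=
  θ ^ properLowerCount π * ζ ^ properUpperCount π
    / ∏ j ∈ Finset.range (n - 1), (θ + ζ + (j : ℝ))

/-- the variance of the number of proper lower records under `P_n^{(θ,ζ)}` -/
noncomputable def varLower (θ ζ : ℝ) (n : ℕ) : ℝ :=
  (∑ π : Equiv.Perm (Fin n), (properLowerCount π : ℝ) ^ 2 * Ptz θ ζ π)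
    - (∑ π : Equiv.Perm (Fin n), (properLowerCount π : ℝ) * Ptz θ ζ π) ^ 2

/-! ### Auxiliary material -/

section Combinatorics

/-- Extend a permutation of `Fin n` to one of `Fin (n+1)`: the last position gets value `v`,
and the first `n` positions get the pattern of `σ` on the remaining values
(order-preservingly relabelled via `Fin.succAbove v`). -/
noncomputable def extPerm {n : ℕ} (σ : Equiv.Perm (Fin n)) (v : Fin (n+1)) :
    Equiv.Perm (Fin (n+1)) :=
  Equiv.ofBijective (fun j => Fin.lastCases v (fun i => v.succAbove (σ i)) j) <| by
    rw [Fintype.bijective_iff_injective_and_card]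
    refine ⟨?_, rfl⟩
    intro a b hab
    induction a using Fin.lastCases with
    | last =>
      induction b using Fin.lastCases with
      | last => rfl
      | cast i =>
        simp only [Fin.lastCases_last, Fin.lastCases_castSucc] at hab
        exact absurd hab.symm (Fin.succAbove_ne v (σ i))
    | cast i =>
      induction b using Fin.lastCases with
      | last =>
        simp only [Fin.lastCases_last, Fin.lastCases_castSucc] at hab
        exact absurd hab (Fin.succAbove_ne v (σ i))
      | cast i' =>
        simp only [Fin.lastCases_castSucc] at hab
        have := σ.injective (Fin.succAbove_right_injective hab)
        exact congrArg Fin.castSucc this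

@[simp] lemma extPerm_castSucc {n : ℕ} (σ : Equiv.Perm (Fin n)) (v : Fin (n+1)) (i : Fin n) :
    extPerm σ v (Fin.castSucc i) = v.succAbove (σ i) := by
  simp [extPerm, Equiv.ofBijective]

@[simp] lemma extPerm_last {n : ℕ} (σ : Equiv.Perm (Fin n)) (v : Fin (n+1)) :
    extPerm σ v (Fin.last n) = v := by
  simp [extPerm, Equiv.ofBijective]

lemma extPerm_bijective (n : ℕ) :
    Function.Bijective (fun p : Equiv.Perm (Fin n) × Fin (n+1) => extPerm p.1 p.2) := by
  rw [Fintype.bijective_iff_injective_and_card]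
  constructor
  · rintro ⟨σ, v⟩ ⟨σ', v'⟩ h
    have hv : v = v' := by
      have := congrArg (fun e : Equiv.Perm (Fin (n+1)) => e (Fin.last n)) h
      simpa using this
    have hσ : σ = σ' := by
      ext i
      have := congrArg (fun e : Equiv.Perm (Fin (n+1)) => e (Fin.castSucc i)) h
      simp only [extPerm_castSucc, hv] at this
      exact congrArg Fin.val (Fin.succAbove_right_injective this)
    simp [hv, hσ]
  · simp [Fintype.card_perm, Nat.factorial_succ, Nat.mul_comm]

lemma lower_castSucc {n : ℕ} (σ : Equiv.Perm (Fin n)) (v : Fin (n+1)) (j : Fin n) :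
    isLowerRecord (extPerm σ v) (Fin.castSucc j) ↔ isLowerRecord σ j := by
  constructor
  · intro h k hk
    have := h (Fin.castSucc k) (Fin.castSucc_le_castSucc_iff.2 hk)
    simpa [Fin.succAbove_le_succAbove_iff] using this
  · intro h k hk
    induction k using Fin.lastCases with
    | last => exact absurd hk (Fin.castSucc_lt_last j).not_ge
    | cast k' =>
      have := h k' (Fin.castSucc_le_castSucc_iff.1 hk)
      simpa [Fin.succAbove_le_succAbove_iff] using this

lemma upper_castSucc {n : ℕ} (σ : Equiv.Perm (Fin n)) (v : Fin (n+1)) (j : Fin n) :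
    isUpperRecord (extPerm σ v) (Fin.castSucc j) ↔ isUpperRecord σ j := by
  constructor
  · intro h k hk
    have := h (Fin.castSucc k) (Fin.castSucc_le_castSucc_iff.2 hk)
    simpa [Fin.succAbove_le_succAbove_iff] using this
  · intro h k hk
    induction k using Fin.lastCases with
    | last => exact absurd hk (Fin.castSucc_lt_last j).not_ge
    | cast k' =>
      have := h k' (Fin.castSucc_le_castSucc_iff.1 hk)
      simpa [Fin.succAbove_le_succAbove_iff] using this

lemma lower_last {n : ℕ} (π : Equiv.Perm (Fin (n+1))) :
    isLowerRecord π (Fin.last n) ↔ π (Fin.last n) = 0 := by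
  constructor
  · intro h
    have := h (π.symm 0) (Fin.le_last _)
    simpa [Fin.le_zero_iff] using this
  · intro h k _
    simp [h]

lemma upper_last {n : ℕ} (π : Equiv.Perm (Fin (n+1))) :
    isUpperRecord π (Fin.last n) ↔ π (Fin.last n) = Fin.last n := by
  constructor
  · intro h
    have := h (π.symm (Fin.last n)) (Fin.le_last _)
    simp only [Equiv.apply_symm_apply] at this
    exact le_antisymm (Fin.le_last _) this
  · intro h k _
    rw [h]; exact Fin.le_last _

lemma count_as_sum {n : ℕ} (π : Equiv.Perm (Fin n)) :
    properLowerCount π = ∑ j : Fin n, if 0 < j.val ∧ isLowerRecord π j then 1 else 0 := by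
  rw [properLowerCount, Finset.card_filter]

lemma ucount_as_sum {n : ℕ} (π : Equiv.Perm (Fin n)) :
    properUpperCount π = ∑ j : Fin n, if 0 < j.val ∧ isUpperRecord π j then 1 else 0 := by
  rw [properUpperCount, Finset.card_filter]

lemma lowerCount_ext {n : ℕ} (σ : Equiv.Perm (Fin (n+1))) (v : Fin (n+2)) :
    properLowerCount (extPerm σ v) = properLowerCount σ + if v = 0 then 1 else 0 := by
  rw [count_as_sum, count_as_sum σ, Fin.sum_univ_castSucc]
  congr 1
  · apply Finset.sum_congr rfl
    intro j _
    congr 1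
    simp [lower_castSucc]
  · simp [lower_last]

lemma upperCount_ext {n : ℕ} (σ : Equiv.Perm (Fin (n+1))) (v : Fin (n+2)) :
    properUpperCount (extPerm σ v) = properUpperCount σ + if v = Fin.last (n+1) then 1 else 0 := by
  rw [ucount_as_sum, ucount_as_sum σ, Fin.sum_univ_castSucc]
  congr 1
  · apply Finset.sum_congr rfl
    intro j _
    congr 1
    simp [upper_castSucc]
  · simp [upper_last]

lemma lowerCount_one (π : Equiv.Perm (Fin 1)) : properLowerCount π = 0 := by
  rw [count_as_sum]
  apply Finset.sum_eq_zero
  intro j _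
  have : j.val = 0 := by omega
  simp [this]

lemma upperCount_one (π : Equiv.Perm (Fin 1)) : properUpperCount π = 0 := by
  rw [ucount_as_sum]
  apply Finset.sum_eq_zero
  intro j _
  have : j.val = 0 := by omega
  simp [this]

end Combinatorics

section SumRecursion

lemma sum_perm_succ (t : ℕ → ℕ → ℝ) (n : ℕ) :
    ∑ π : Equiv.Perm (Fin (n+2)), t (properLowerCount π) (properUpperCount π)
      = ∑ σ : Equiv.Perm (Fin (n+1)), ∑ v : Fin (n+2),
          t (properLowerCount σ + if v = 0 then 1 else 0)
            (properUpperCount σ + if v = Fin.last (n+1) then 1 else 0) := by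
  rw [show (∑ π : Equiv.Perm (Fin (n+2)), t (properLowerCount π) (properUpperCount π))
      = ∑ p : Equiv.Perm (Fin (n+1)) × Fin (n+2),
          t (properLowerCount (extPerm p.1 p.2)) (properUpperCount (extPerm p.1 p.2)) from
    (Fintype.sum_bijective _ (extPerm_bijective (n+1)) _ _ (fun p => rfl)).symm]
  rw [Fintype.sum_prod_type]
  exact Fintype.sum_congr _ _ fun σ => Fintype.sum_congr _ _ fun v => by
    rw [lowerCount_ext, upperCount_ext]

lemma innerSumTZ (t : ℕ → ℕ → ℝ) (n ℓ u : ℕ) :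
    ∑ v : Fin (n+2), t (ℓ + if v = 0 then 1 else 0) (u + if v = Fin.last (n+1) then 1 else 0)
      = (n+2) * t ℓ u + (t (ℓ+1) u - t ℓ u) + (t ℓ (u+1) - t ℓ u) := by
  have h0 : (0 : Fin (n+2)) ≠ Fin.last (n+1) := by
    intro h
    have := congrArg Fin.val h
    simp [Fin.last] at this
  have key : ∀ v : Fin (n+2),
      t (ℓ + if v = 0 then 1 else 0) (u + if v = Fin.last (n+1) then 1 else 0)
        = t ℓ u + (if v = 0 then t (ℓ+1) u - t ℓ u else 0)
          + (if v = Fin.last (n+1) then t ℓ (u+1) - t ℓ u else 0) := by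
    intro v
    by_cases hv : v = 0
    · subst hv
      simp [h0, if_neg (Ne.symm h0)]
    · by_cases hv' : v = Fin.last (n+1) <;> simp [hv, hv']
  rw [Fintype.sum_congr _ _ key]
  simp [Finset.sum_add_distrib, Finset.sum_ite_eq' univ]

noncomputable def Fs (θ ζ : ℝ) (n : ℕ) : ℝ :=
  ∑ π : Equiv.Perm (Fin n), θ ^ properLowerCount π * ζ ^ properUpperCount π
noncomputable def Gs (θ ζ : ℝ) (n : ℕ) : ℝ :=
  ∑ π : Equiv.Perm (Fin n),
    (properLowerCount π : ℝ) * (θ ^ properLowerCount π * ζ ^ properUpperCount π)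
noncomputable def Hs (θ ζ : ℝ) (n : ℕ) : ℝ :=
  ∑ π : Equiv.Perm (Fin n),
    (properLowerCount π : ℝ)^2 * (θ ^ properLowerCount π * ζ ^ properUpperCount π)

variable (θ ζ : ℝ)

lemma Fs_one : Fs θ ζ 1 = 1 := by
  rw [Fs]
  rw [Fintype.sum_congr _ _ (fun π => by rw [lowerCount_one, upperCount_one]; simp :
    ∀ π : Equiv.Perm (Fin 1), θ ^ properLowerCount π * ζ ^ properUpperCount π = 1)]
  simp

lemma Gs_one : Gs θ ζ 1 = 0 := by
  rw [Gs]
  rw [Fintype.sum_congr _ _ (fun π => by rw [lowerCount_one]; simp :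
    ∀ π : Equiv.Perm (Fin 1),
      (properLowerCount π : ℝ) * (θ ^ properLowerCount π * ζ ^ properUpperCount π) = 0)]
  simp

lemma Hs_one : Hs θ ζ 1 = 0 := by
  rw [Hs]
  rw [Fintype.sum_congr _ _ (fun π => by rw [lowerCount_one]; simp :
    ∀ π : Equiv.Perm (Fin 1),
      (properLowerCount π : ℝ)^2 * (θ ^ properLowerCount π * ζ ^ properUpperCount π) = 0)]
  simp

lemma Fs_rec (n : ℕ) : Fs θ ζ (n+2) = (θ + ζ + n) * Fs θ ζ (n+1) := by
  rw [Fs, sum_perm_succ (fun a b => θ ^ a * ζ ^ b) n]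
  rw [Fintype.sum_congr _ _ (fun σ => innerSumTZ (fun a b => θ ^ a * ζ ^ b) n _ _)]
  rw [Fs, Finset.mul_sum]
  apply Fintype.sum_congr
  intro σ
  simp only [pow_succ]
  ring

lemma Gs_rec (n : ℕ) :
    Gs θ ζ (n+2) = (θ + ζ + n) * Gs θ ζ (n+1) + θ * Fs θ ζ (n+1) := by
  rw [Gs, sum_perm_succ (fun a b => (a : ℝ) * (θ ^ a * ζ ^ b)) n]
  rw [Fintype.sum_congr _ _ (fun σ => innerSumTZ (fun a b => (a : ℝ) * (θ ^ a * ζ ^ b)) n _ _)]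
  rw [Gs, Fs, Finset.mul_sum, Finset.mul_sum, ← Finset.sum_add_distrib]
  apply Fintype.sum_congr
  intro σ
  push_cast
  simp only [pow_succ]
  ring

lemma Hs_rec (n : ℕ) :
    Hs θ ζ (n+2) = (θ + ζ + n) * Hs θ ζ (n+1) + θ * (2 * Gs θ ζ (n+1) + Fs θ ζ (n+1)) := by
  rw [Hs, sum_perm_succ (fun a b => (a : ℝ)^2 * (θ ^ a * ζ ^ b)) n]
  rw [Fintype.sum_congr _ _ (fun σ => innerSumTZ (fun a b => (a : ℝ)^2 * (θ ^ a * ζ ^ b)) n _ _)]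
  rw [Hs, Gs, Fs]
  simp only [Finset.mul_sum, mul_add, Finset.mul_sum, ← Finset.sum_add_distrib]
  apply Fintype.sum_congr
  intro σ
  push_cast
  simp only [pow_succ]
  ring

end SumRecursion

section ClosedForms

noncomputable def prodc (θ ζ : ℝ) (n : ℕ) : ℝ := ∏ j ∈ Finset.range n, (θ + ζ + (j : ℝ))
noncomputable def qtz (θ ζ : ℝ) (j : ℕ) : ℝ := θ / (θ + ζ + j)
noncomputable def Ssum (θ ζ : ℝ) (n : ℕ) : ℝ := ∑ j ∈ Finset.range n, qtz θ ζ j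
noncomputable def Vsum (θ ζ : ℝ) (n : ℕ) : ℝ :=
  ∑ j ∈ Finset.range n, (qtz θ ζ j - (qtz θ ζ j)^2)

variable {θ ζ : ℝ}

lemma denom_pos (hθ : 0 < θ) (hζ : 0 < ζ) (j : ℕ) : 0 < θ + ζ + (j : ℝ) := by positivity

lemma prodc_pos (hθ : 0 < θ) (hζ : 0 < ζ) (n : ℕ) : 0 < prodc θ ζ n :=
  Finset.prod_pos fun j _ => denom_pos hθ hζ j

lemma closed_forms (hθ : 0 < θ) (hζ : 0 < ζ) (n : ℕ) :
    Fs θ ζ (n+1) = prodc θ ζ n ∧ Gs θ ζ (n+1) = prodc θ ζ n * Ssum θ ζ n ∧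
      Hs θ ζ (n+1) = prodc θ ζ n * ((Ssum θ ζ n)^2 + Vsum θ ζ n) := by
  induction n with
  | zero => simp [Fs_one, Gs_one, Hs_one, prodc, Ssum, Vsum]
  | succ m ih =>
    obtain ⟨hF, hG, hH⟩ := ih
    have hd : θ + ζ + (m : ℝ) ≠ 0 := (denom_pos hθ hζ m).ne'
    have hq : qtz θ ζ m * (θ + ζ + m) = θ := by
      rw [qtz]; field_simp
    have hp : prodc θ ζ (m+1) = prodc θ ζ m * (θ + ζ + (m:ℝ)) := Finset.prod_range_succ _ m
    have hs : Ssum θ ζ (m+1) = Ssum θ ζ m + qtz θ ζ m := Finset.sum_range_succ _ m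
    have hv : Vsum θ ζ (m+1) = Vsum θ ζ m + (qtz θ ζ m - (qtz θ ζ m)^2) :=
      Finset.sum_range_succ _ m
    refine ⟨?_, ?_, ?_⟩
    · rw [Fs_rec, hF, hp]; ring
    · rw [Gs_rec, hF, hG, hp, hs]
      linear_combination (-(prodc θ ζ m)) * hq
    · rw [Hs_rec, hF, hG, hH, hp, hs, hv]
      linear_combination (-(prodc θ ζ m * (2 * Ssum θ ζ m + 1))) * hq

lemma varLower_eq (hθ : 0 < θ) (hζ : 0 < ζ) (n : ℕ) :
    varLower θ ζ (n+1) = Vsum θ ζ n := by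
  obtain ⟨hF, hG, hH⟩ := closed_forms hθ hζ n
  have hP : prodc θ ζ n ≠ 0 := (prodc_pos hθ hζ n).ne'
  have h1 : (∑ π : Equiv.Perm (Fin (n+1)), (properLowerCount π : ℝ) ^ 2 * Ptz θ ζ π)
      = Hs θ ζ (n+1) / prodc θ ζ n := by
    rw [Hs, Finset.sum_div]
    apply Fintype.sum_congr
    intro π
    rw [Ptz, mul_div_assoc]
    norm_num [prodc]
    ring
  have h2 : (∑ π : Equiv.Perm (Fin (n+1)), (properLowerCount π : ℝ) * Ptz θ ζ π)
      = Gs θ ζ (n+1) / prodc θ ζ n := by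
    rw [Gs, Finset.sum_div]
    apply Fintype.sum_congr
    intro π
    rw [Ptz, mul_div_assoc]
    norm_num [prodc]
    ring
  rw [varLower, h1, h2, hH, hG]
  field_simp
  ring

end ClosedForms

section Analysis

open Filter Real

lemma harmonic_lb (c : ℝ) (hc : 0 < c) (m : ℕ) :
    Real.log (c + m) - Real.log c ≤ ∑ j ∈ Finset.range m, 1 / (c + j) := by
  induction m with
  | zero => simp
  | succ k ih =>
    rw [Finset.sum_range_succ]
    have hck : 0 < c + k := by positivity
    have key : Real.log (c + (k+1)) - Real.log (c + k) ≤ 1 / (c + k) := by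
      have h1 : Real.log ((c + (k+1)) / (c + k)) ≤ (c + (k+1)) / (c + k) - 1 :=
        Real.log_le_sub_one_of_pos (by positivity)
      rw [Real.log_div (by positivity) hck.ne'] at h1
      have h2 : (c + (k+1) : ℝ) / (c + k) - 1 = 1 / (c + k) := by field_simp; ring
      linarith [h1, h2.le]
    push_cast
    push_cast at ih key
    linarith

lemma harmonic_ub (c : ℝ) (hc : 0 < c) (m : ℕ) :
    ∑ j ∈ Finset.range (m+1), 1 / (c + j) ≤ 1 / c + (Real.log (c + m) - Real.log c) := by
  induction m with
  | zero => simp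
  | succ k ih =>
    rw [Finset.sum_range_succ]
    have hck : 0 < c + k := by positivity
    have hck1 : 0 < c + (k+1:ℝ) := by positivity
    have key : 1 / (c + (k+1:ℝ)) ≤ Real.log (c + (k+1)) - Real.log (c + k) := by
      have h1 : Real.log ((c + k) / (c + (k+1))) ≤ (c + k) / (c + (k+1)) - 1 :=
        Real.log_le_sub_one_of_pos (by positivity)
      rw [Real.log_div hck.ne' hck1.ne'] at h1
      have h2 : (c + k : ℝ) / (c + (k+1)) - 1 = -(1 / (c + (k+1))) := by field_simp; ring
      linarith [h1, h2.le]
    push_cast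
    push_cast at ih key
    linarith

lemma sq_sum_ub (c : ℝ) (hc : 0 < c) (m : ℕ) :
    ∑ j ∈ Finset.range m, 1 / (c + j) ^ 2 ≤ 1 / c ^ 2 + 1 / c := by
  have main : ∀ k : ℕ,
      ∑ j ∈ Finset.range (k+1), 1 / (c + j) ^ 2 ≤ 1 / c ^ 2 + 1 / c - 1 / (c + k) := by
    intro k
    induction k with
    | zero => simp
    | succ k ih =>
      rw [Finset.sum_range_succ]
      have hck : 0 < c + k := by positivity
      have hck1 : 0 < c + (k+1:ℝ) := by positivity
      have key : 1 / (c + (k+1:ℝ)) ^ 2 ≤ 1 / (c + k) - 1 / (c + (k+1:ℝ)) := by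
        have e : 1 / (c + k) - 1 / (c + (k+1:ℝ)) = 1 / ((c + k) * (c + (k+1:ℝ))) := by
          field_simp
          ring
        rw [e]
        apply one_div_le_one_div_of_le (by positivity)
        nlinarith
      push_cast
      push_cast at ih key
      linarith
  cases m with
  | zero =>
    simp
    positivity
  | succ k =>
    have := main k
    have : (0:ℝ) < c + k := by positivity
    have h0 : 0 ≤ 1 / (c + (k:ℝ)) := by positivity
    linarith [main k]

variable {θ ζ : ℝ}

lemma Vsum_eq (m : ℕ) :
    Vsum θ ζ m = θ * (∑ j ∈ Finset.range m, 1 / (θ + ζ + j))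
      - θ^2 * (∑ j ∈ Finset.range m, 1 / (θ + ζ + j)^2) := by
  rw [Vsum, Finset.sum_sub_distrib, Finset.mul_sum, Finset.mul_sum]
  congr 1
  · exact Finset.sum_congr rfl fun j _ => by rw [qtz, mul_one_div]
  · exact Finset.sum_congr rfl fun j _ => by rw [qtz, div_pow, mul_one_div]

lemma Vsum_lb (hθ : 0 < θ) (hζ : 0 < ζ) (m : ℕ) :
    θ * (Real.log (θ + ζ + m) - Real.log (θ + ζ)) - θ^2 * (1/(θ+ζ)^2 + 1/(θ+ζ))
      ≤ Vsum θ ζ m := by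
  rw [Vsum_eq]
  have hc : 0 < θ + ζ := by positivity
  have h1 := harmonic_lb (θ + ζ) hc m
  have h2 := sq_sum_ub (θ + ζ) hc m
  have := mul_le_mul_of_nonneg_left h1 hθ.le
  have := mul_le_mul_of_nonneg_left h2 (sq_nonneg θ)
  nlinarith

lemma Vsum_ub (hθ : 0 < θ) (hζ : 0 < ζ) (m : ℕ) :
    Vsum θ ζ m ≤ θ * (1/(θ+ζ) + (Real.log (θ + ζ + m) - Real.log (θ + ζ))) := by
  rw [Vsum_eq]
  have hc : 0 < θ + ζ := by positivity
  have hmono : (∑ j ∈ Finset.range m, 1 / (θ + ζ + (j:ℝ)))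
      ≤ ∑ j ∈ Finset.range (m+1), 1 / (θ + ζ + (j:ℝ)) := by
    apply Finset.sum_le_sum_of_subset_of_nonneg (Finset.range_subset_range.2 (Nat.le_succ m))
    intro j _ _
    positivity
  have h1 := harmonic_ub (θ + ζ) hc m
  have h2 : (0:ℝ) ≤ θ^2 * (∑ j ∈ Finset.range m, 1 / (θ + ζ + (j:ℝ))^2) := by positivity
  nlinarith [mul_le_mul_of_nonneg_left (hmono.trans h1) hθ.le]

lemma aux_tendsto (c : ℝ) (hc : 0 < c) :
    Tendsto (fun m : ℕ => Real.log (c + m) / Real.log (m + 1)) atTop (nhds 1) := by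
  have h1 : Tendsto (fun m : ℕ => ((m:ℝ) + 1)) atTop atTop :=
    Filter.tendsto_atTop_add_const_right _ 1 tendsto_natCast_atTop_atTop
  have hlog : Tendsto (fun m : ℕ => Real.log ((m:ℝ) + 1)) atTop atTop :=
    Real.tendsto_log_atTop.comp h1
  have hinv : Tendsto (fun m : ℕ => 1 / Real.log ((m:ℝ) + 1)) atTop (nhds 0) :=
    tendsto_const_nhds.div_atTop hlog
  have hfrac : Tendsto (fun m : ℕ => (c + m) / ((m:ℝ) + 1)) atTop (nhds 1) := by
    have h2 : Tendsto (fun m : ℕ => 1 + (c - 1) / ((m:ℝ) + 1)) atTop (nhds (1 + 0)) :=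
      tendsto_const_nhds.add (tendsto_const_nhds.div_atTop h1)
    rw [add_zero] at h2
    apply Tendsto.congr _ h2
    intro m
    have : ((m:ℝ) + 1) ≠ 0 := by positivity
    field_simp
    ring
  have hlogfrac : Tendsto (fun m : ℕ => Real.log ((c + m) / ((m:ℝ) + 1))) atTop (nhds 0) := by
    have := (Real.continuousAt_log one_ne_zero).tendsto.comp hfrac
    simpa [Function.comp_def] using this
  have hprod : Tendsto (fun m : ℕ =>
      Real.log ((c + m) / ((m:ℝ) + 1)) * (1 / Real.log ((m:ℝ) + 1))) atTop (nhds 0) := by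
    simpa using hlogfrac.mul hinv
  have key := hprod.add (tendsto_const_nhds (x := (1:ℝ)))
  rw [zero_add] at key
  apply Tendsto.congr' _ key
  filter_upwards [eventually_ge_atTop 1] with m hm
  have hm1 : (1:ℝ) < (m:ℝ) + 1 := by
    have : (1:ℝ) ≤ (m:ℝ) := by exact_mod_cast hm
    linarith
  have hL : Real.log ((m:ℝ) + 1) ≠ 0 := (Real.log_pos hm1).ne'
  have hcm : (0:ℝ) < c + m := by positivity
  rw [Real.log_div hcm.ne' (by positivity)]
  field_simp
  ring

lemma Vsum_tendsto (hθ : 0 < θ) (hζ : 0 < ζ) :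
    Tendsto (fun m : ℕ => Vsum θ ζ m / Real.log ((m:ℝ) + 1)) atTop (nhds θ) := by
  set c := θ + ζ with hcdef
  have hc : 0 < c := by positivity
  have h1 : Tendsto (fun m : ℕ => ((m:ℝ) + 1)) atTop atTop :=
    Filter.tendsto_atTop_add_const_right _ 1 tendsto_natCast_atTop_atTop
  have hlog : Tendsto (fun m : ℕ => Real.log ((m:ℝ) + 1)) atTop atTop :=
    Real.tendsto_log_atTop.comp h1
  have hinv : Tendsto (fun m : ℕ => 1 / Real.log ((m:ℝ) + 1)) atTop (nhds 0) :=
    tendsto_const_nhds.div_atTop hlog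
  have hratio := aux_tendsto c hc
  have hlb : Tendsto (fun m : ℕ =>
      (θ * (Real.log (c + m) - Real.log c) - θ^2 * (1/c^2 + 1/c)) / Real.log ((m:ℝ) + 1))
      atTop (nhds θ) := by
    have h2 : Tendsto (fun m : ℕ =>
        θ * (Real.log (c + m) / Real.log ((m:ℝ)+1))
          - (θ * Real.log c + θ^2 * (1/c^2 + 1/c)) * (1 / Real.log ((m:ℝ)+1)))
        atTop (nhds (θ * 1 - (θ * Real.log c + θ^2 * (1/c^2 + 1/c)) * 0)) :=
      (hratio.const_mul θ).sub (hinv.const_mul _)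
    have : θ * 1 - (θ * Real.log c + θ^2 * (1/c^2 + 1/c)) * 0 = θ := by ring
    rw [this] at h2
    apply Tendsto.congr _ h2
    intro m
    ring
  have hub : Tendsto (fun m : ℕ =>
      (θ * (1/c + (Real.log (c + m) - Real.log c))) / Real.log ((m:ℝ) + 1))
      atTop (nhds θ) := by
    have h2 : Tendsto (fun m : ℕ =>
        θ * (Real.log (c + m) / Real.log ((m:ℝ)+1))
          + (θ * (1/c - Real.log c)) * (1 / Real.log ((m:ℝ)+1)))
        atTop (nhds (θ * 1 + (θ * (1/c - Real.log c)) * 0)) :=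
      (hratio.const_mul θ).add (hinv.const_mul _)
    have : θ * 1 + (θ * (1/c - Real.log c)) * 0 = θ := by ring
    rw [this] at h2
    apply Tendsto.congr _ h2
    intro m
    ring
  apply tendsto_of_tendsto_of_tendsto_of_le_of_le' hlb hub
  · filter_upwards [eventually_ge_atTop 1] with m hm
    have hm1 : (1:ℝ) < (m:ℝ) + 1 := by
      have : (1:ℝ) ≤ (m:ℝ) := by exact_mod_cast hm
      linarith
    have hL : 0 < Real.log ((m:ℝ) + 1) := Real.log_pos hm1
    have := Vsum_lb hθ hζ m
    rw [← hcdef] at this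
    gcongr
  · filter_upwards [eventually_ge_atTop 1] with m hm
    have hm1 : (1:ℝ) < (m:ℝ) + 1 := by
      have : (1:ℝ) ≤ (m:ℝ) := by exact_mod_cast hm
      linarith
    have hL : 0 < Real.log ((m:ℝ) + 1) := Real.log_pos hm1
    have := Vsum_ub hθ hζ m
    rw [← hcdef] at this
    gcongr

end Analysis

/-- `V_n(θ,ζ)/log n → θ` as `n → ∞`. -/
theorem stmt_9 (θ ζ : ℝ) (hθ : 0 < θ) (hζ : 0 < ζ) :
    Filter.Tendsto (fun n : ℕ => varLower θ ζ n / Real.log n) Filter.atTop (nhds θ) := by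
  rw [← Filter.tendsto_add_atTop_iff_nat 1]
  apply Filter.Tendsto.congr _ (Vsum_tendsto hθ hζ)
  intro m
  rw [varLower_eq hθ hζ m]
  push_cast
  ring
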